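/- For α = 1/2 and ε > 0, let h_ε(θ) = sin(θ)/(ε² + θ²)^{1/2} on (0, π), and let θ̃_ε ∈ (0, π/2) be defined by θ̃_ε tan(θ̃_ε) - θ̃_ε² = ε². Then on (θ̃_ε, π), the derivative satisfies 0 ≤ -h_ε'(θ) ≤ -h'(θ), where h(θ) = sin(θ)/θ; in particular sup_{θ∈(θ̃_ε,π)} |h_ε'(θ)| ≤ -inf_{θ∈(0,π)} h'(θ), a bound independent of ε. -/

import Mathlib

/-- The regularized critical kernel `h_ε(θ) = sin θ / (ε² + θ²)^{1/2}` on `(0, π)`. -/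
noncomputable def hepsS (ε θ : ℝ) : ℝ := Real.sin θ / Real.sqrt (ε ^ 2 + θ ^ 2)

/-- The critical kernel `h(θ) = sin θ / θ` on `(0, π)`. -/
noncomputable def hS (θ : ℝ) : ℝ := Real.sin θ / θ

open Real in
lemma hS_deriv {θ : ℝ} (hθ : θ ≠ 0) :
    deriv hS θ = (Real.cos θ * θ - Real.sin θ) / θ ^ 2 := by
  have h := (Real.hasDerivAt_sin θ).div (hasDerivAt_id θ) hθ
  have : deriv (fun t => Real.sin t / t) θ = (Real.cos θ * θ - Real.sin θ) / θ ^ 2 := by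
    rw [show (fun t => Real.sin t / t) = Real.sin / id from rfl]; simpa using h.deriv
  exact this

open Real in
lemma hepsS_hasDeriv {ε θ : ℝ} (hε : 0 < ε) :
    HasDerivAt (hepsS ε)
      ((Real.cos θ * Real.sqrt (ε ^ 2 + θ ^ 2) - Real.sin θ * (θ / Real.sqrt (ε ^ 2 + θ ^ 2))) /
        (Real.sqrt (ε ^ 2 + θ ^ 2)) ^ 2) θ := by
  have hpos : 0 < ε ^ 2 + θ ^ 2 := by positivity
  have hu : HasDerivAt (fun t : ℝ => ε ^ 2 + t ^ 2) (2 * θ) θ := by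
    simpa using (hasDerivAt_pow 2 θ).const_add (ε ^ 2)
  have hs : HasDerivAt Real.sqrt (1 / (2 * Real.sqrt (ε ^ 2 + θ ^ 2))) (ε ^ 2 + θ ^ 2) :=
    Real.hasDerivAt_sqrt hpos.ne'
  have hc := hs.comp θ hu
  have hAne : Real.sqrt (ε ^ 2 + θ ^ 2) ≠ 0 := by positivity
  have h := (Real.hasDerivAt_sin θ).div hc hAne
  have : HasDerivAt (fun t => Real.sin t / Real.sqrt (ε ^ 2 + t ^ 2))
      ((Real.cos θ * Real.sqrt (ε ^ 2 + θ ^ 2) - Real.sin θ * (θ / Real.sqrt (ε ^ 2 + θ ^ 2))) /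
        (Real.sqrt (ε ^ 2 + θ ^ 2)) ^ 2) θ := by
    refine h.congr_deriv ?_
    simp only [Function.comp_apply]
    field_simp
  exact this

/-- `sin t - t cos t ≥ 0` on `[0, π]`. -/
lemma G_nonneg : ∀ t ∈ Set.Icc 0 Real.pi, 0 ≤ Real.sin t - t * Real.cos t := by
  set f : ℝ → ℝ := fun t => Real.sin t - t * Real.cos t with hf
  have hder : ∀ t : ℝ, HasDerivAt f (t * Real.sin t) t := by
    intro t
    have h := (Real.hasDerivAt_sin t).sub ((hasDerivAt_id t).mul (Real.hasDerivAt_cos t))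
    refine h.congr_deriv ?_; simp only [id_eq]; ring
  have hmono : MonotoneOn f (Set.Icc 0 Real.pi) := by
    apply monotoneOn_of_deriv_nonneg (convex_Icc 0 Real.pi)
    · exact (Continuous.continuousOn (by continuity))
    · intro t _; exact (hder t).differentiableAt.differentiableWithinAt
    · intro t ht
      rw [interior_Icc] at ht
      rw [(hder t).deriv]
      exact mul_nonneg ht.1.le
        (Real.sin_nonneg_of_nonneg_of_le_pi ht.1.le ht.2.le)
  intro t ht
  have h := hmono (Set.left_mem_Icc.2 Real.pi_pos.le) ht ht.1
  simp only [hf] at h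
  simpa using h

theorem stmt19 (ε : ℝ) (hε : 0 < ε) (θt : ℝ) (hθt : θt ∈ Set.Ioo 0 (Real.pi / 2))
    (hdef : θt * Real.tan θt - θt ^ 2 = ε ^ 2) :
    (∀ θ ∈ Set.Ioo θt Real.pi,
      0 ≤ -(deriv (hepsS ε) θ) ∧ -(deriv (hepsS ε) θ) ≤ -(deriv hS θ))
    ∧ (∀ θ ∈ Set.Ioo θt Real.pi,
      |deriv (hepsS ε) θ| ≤ sSup ((fun t => -(deriv hS t)) '' Set.Ioo 0 Real.pi)) := by
  have hπ := Real.pi_pos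
  have hθtπ : θt < Real.pi := lt_trans hθt.2 (by linarith)
  -- cos θt > 0 and g θt = 0
  have hcosθt : 0 < Real.cos θt := Real.cos_pos_of_mem_Ioo ⟨by linarith [hθt.1], hθt.2⟩
  have hgθt : θt * Real.sin θt - (ε ^ 2 + θt ^ 2) * Real.cos θt = 0 := by
    have : ε ^ 2 + θt ^ 2 = θt * (Real.sin θt / Real.cos θt) := by
      rw [← Real.tan_eq_sin_div_cos]; linarith
    rw [this]; field_simp; ring
  -- monotonicity of g on [θt, π]
  set g : ℝ → ℝ := fun t => t * Real.sin t - (ε ^ 2 + t ^ 2) * Real.cos t with hgdef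
  have hgder : ∀ t : ℝ, HasDerivAt g
      (Real.sin t - t * Real.cos t + (ε ^ 2 + t ^ 2) * Real.sin t) t := by
    intro t
    have h1 := (hasDerivAt_id t).mul (Real.hasDerivAt_sin t)
    have h2 : HasDerivAt (fun s : ℝ => ε ^ 2 + s ^ 2) (2 * t) t := by
      simpa using (hasDerivAt_pow 2 t).const_add (ε ^ 2)
    have h := h1.sub (h2.mul (Real.hasDerivAt_cos t))
    refine h.congr_deriv ?_; simp only [id_eq]; ring
  have hgmono : MonotoneOn g (Set.Icc θt Real.pi) := by
    apply monotoneOn_of_deriv_nonneg (convex_Icc θt Real.pi)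
    · exact Continuous.continuousOn (by continuity)
    · intro t _; exact (hgder t).differentiableAt.differentiableWithinAt
    · intro t ht
      rw [interior_Icc] at ht
      have ht0 : 0 < t := lt_trans hθt.1 ht.1
      have hsin : 0 ≤ Real.sin t := Real.sin_nonneg_of_nonneg_of_le_pi ht0.le ht.2.le
      have hG := G_nonneg t ⟨ht0.le, ht.2.le⟩
      rw [(hgder t).deriv]
      have : 0 ≤ (ε ^ 2 + t ^ 2) * Real.sin t := by positivity
      linarith
  have key : ∀ θ ∈ Set.Ioo θt Real.pi,
      0 ≤ -(deriv (hepsS ε) θ) ∧ -(deriv (hepsS ε) θ) ≤ -(deriv hS θ) := by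
    intro θ hθ
    have hθ0 : 0 < θ := lt_trans hθt.1 hθ.1
    have hsin : 0 ≤ Real.sin θ := Real.sin_nonneg_of_nonneg_of_le_pi hθ0.le hθ.2.le
    have hG : 0 ≤ Real.sin θ - θ * Real.cos θ := G_nonneg θ ⟨hθ0.le, hθ.2.le⟩
    have hg : 0 ≤ θ * Real.sin θ - (ε ^ 2 + θ ^ 2) * Real.cos θ := by
      have := hgmono (Set.left_mem_Icc.2 hθtπ.le) ⟨hθ.1.le, hθ.2.le⟩ hθ.1.le
      rw [hgdef] at this
      simp only at this
      linarith [hgθt, this]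
    set A := Real.sqrt (ε ^ 2 + θ ^ 2) with hAdef
    have hApos : 0 < A := Real.sqrt_pos.2 (by positivity)
    have hA2 : A ^ 2 = ε ^ 2 + θ ^ 2 := Real.sq_sqrt (by positivity)
    have hθA : θ ≤ A := by
      rw [hAdef]
      nlinarith [Real.sq_sqrt (show (0:ℝ) ≤ ε ^ 2 + θ ^ 2 by positivity),
        Real.sqrt_nonneg (ε ^ 2 + θ ^ 2)]
    have hderiv : deriv (hepsS ε) θ =
        (Real.cos θ * A - Real.sin θ * (θ / A)) / A ^ 2 := (hepsS_hasDeriv hε).deriv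
    have hneg : -(deriv (hepsS ε) θ) =
        (θ * Real.sin θ - (ε ^ 2 + θ ^ 2) * Real.cos θ) / A ^ 3 := by
      rw [hderiv, ← hA2]
      field_simp
      ring
    have hderivS : -(deriv hS θ) = (Real.sin θ - θ * Real.cos θ) / θ ^ 2 := by
      rw [hS_deriv hθ0.ne']
      field_simp
      ring
    constructor
    · rw [hneg]; positivity
    · rw [hneg, hderivS]
      rw [div_le_div_iff₀ (by positivity) (by positivity)]
      have hid : A ^ 2 * θ * (Real.sin θ - θ * Real.cos θ) -
          θ ^ 2 * (θ * Real.sin θ - (ε ^ 2 + θ ^ 2) * Real.cos θ) =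
          θ * Real.sin θ * ε ^ 2 := by rw [hA2]; ring
      nlinarith [hid,
        mul_nonneg (mul_nonneg (mul_nonneg hApos.le hApos.le) hG) (sub_nonneg.2 hθA),
        mul_nonneg (mul_nonneg hθ0.le hsin) (sq_nonneg ε)]
  refine ⟨key, ?_⟩
  intro θ hθ
  have hθ0 : 0 < θ := lt_trans hθt.1 hθ.1
  obtain ⟨h1, h2⟩ := key θ hθ
  have habs : |deriv (hepsS ε) θ| = -(deriv (hepsS ε) θ) := abs_of_nonpos (by linarith)
  have hbdd : BddAbove ((fun t => -(deriv hS t)) '' Set.Ioo 0 Real.pi) := by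
    refine ⟨Real.pi, ?_⟩
    rintro y ⟨t, ht, rfl⟩
    have ht0 : 0 < t := ht.1
    show -(deriv hS t) ≤ Real.pi
    have hderivS : -(deriv hS t) = (Real.sin t - t * Real.cos t) / t ^ 2 := by
      rw [hS_deriv ht0.ne']
      field_simp; ring
    rw [hderivS]
    rw [div_le_iff₀ (by positivity)]
    have hsle : Real.sin t ≤ t := Real.sin_le ht0.le
    have hcge : 1 - t ^ 2 / 2 ≤ Real.cos t := Real.one_sub_sq_div_two_le_cos
    nlinarith [ht.2, sq_nonneg t]
  have hmem : -(deriv hS θ) ∈ ((fun t => -(deriv hS t)) '' Set.Ioo 0 Real.pi) :=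
    ⟨θ, ⟨hθ0, hθ.2⟩, rfl⟩
  calc |deriv (hepsS ε) θ| = -(deriv (hepsS ε) θ) := habs
    _ ≤ -(deriv hS θ) := h2
    _ ≤ sSup _ := le_csSup hbdd hmem
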